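/- For every s ∈ (0, 1/4) there exists δ > 0 such that for all (a,b) ∈ ℝ² with a² + b² < δ², one has (V_0^2 ∘ H_0^2)(s + a, s + 3/4 + b) = (1/2 − s + a − 2b, 3/4 − s + 2a − 3b) (all coordinates taken modulo 1); that is, V_0^2 ∘ H_0^2 is locally affine at each point of the segment {(s, s + 3/4) : s ∈ (0, 1/4)}, with linear part given by the matrix [[1, −2], [2, −3]]. -/
import Mathlib


/- 𝕋 = ℝ/ℤ, with d_𝕋 the quotient distance (norm of the difference in AddCircle 1). -/
noncomputable section

abbrev T1 := AddCircle (1 : ℝ)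

/-- The distance d_𝕋(x,y) = min{|x−y|, 1−|x−y|} on 𝕋. -/
noncomputable def dT (x y : T1) : ℝ := ‖x - y‖

/-- Horizontal wedge flow map H_ω^τ(x₁,x₂) = (x₁ + τ·d_𝕋(x₂,ω), x₂). -/
noncomputable def Hmap (ω : T1) (τ : ℝ) (p : T1 × T1) : T1 × T1 :=
  (p.1 + (↑(τ * dT p.2 ω) : T1), p.2)

/-- Vertical wedge flow map V_ω^τ(x₁,x₂) = (x₁, x₂ + τ·d_𝕋(x₁,ω)). -/
noncomputable def Vmap (ω : T1) (τ : ℝ) (p : T1 × T1) : T1 × T1 :=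
  (p.1, p.2 + (↑(τ * dT p.1 ω) : T1))

set_option maxHeartbeats 1000000 in
/-- V_0^2 ∘ H_0^2 is locally affine at each point of the segment
{(s, s+3/4) : s ∈ (0,1/4)}, with linear part [[1, −2], [2, −3]]. -/
theorem wedge_tau2_locally_affine (s : ℝ) (hs : s ∈ Set.Ioo (0 : ℝ) (1/4)) :
    ∃ δ > 0, ∀ a b : ℝ, a ^ 2 + b ^ 2 < δ ^ 2 →
      (Vmap 0 2 ∘ Hmap 0 2) (((s + a : ℝ) : T1), ((s + 3/4 + b : ℝ) : T1)) =
        (((1/2 - s + a - 2*b : ℝ) : T1), ((3/4 - s + 2*a - 3*b : ℝ) : T1)) := by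

  obtain ⟨hs0, hs4⟩ := hs
  set m := min s (1/4 - s) with hm
  have hm0 : 0 < m := lt_min hs0 (by linarith)
  have hm1 : m ≤ s := min_le_left _ _
  have hm2 : m ≤ 1/4 - s := min_le_right _ _
  refine ⟨m/4, by positivity, fun a b hab => ?_⟩
  have ha : |a| < m/4 := by
    rw [abs_lt]; constructor <;> nlinarith [sq_nonneg b, sq_nonneg (a + m/4), sq_nonneg (a - m/4)]
  have hb : |b| < m/4 := by
    rw [abs_lt]; constructor <;> nlinarith [sq_nonneg a, sq_nonneg (b + m/4), sq_nonneg (b - m/4)]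
  obtain ⟨ha1, ha2⟩ := abs_lt.mp ha
  obtain ⟨hb1, hb2⟩ := abs_lt.mp hb
  have h1 : dT ((s + 3/4 + b : ℝ) : T1) 0 = 1/4 - s - b := by
    have hr : round (1⁻¹ * (s + 3/4 + b)) = 1 := by
      rw [round_eq, Int.floor_eq_iff] <;> push_cast <;> constructor <;> linarith
    rw [dT, sub_zero, AddCircle.norm_eq, hr]
    rw [abs_of_nonpos (by push_cast; linarith)]
    push_cast; ring
  have h2 : dT ((1/2 - s + a - 2*b : ℝ) : T1) 0 = 1/2 - s + a - 2*b := by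
    have hr : round (1⁻¹ * (1/2 - s + a - 2*b)) = 0 := by
      rw [round_eq, Int.floor_eq_iff] <;> push_cast <;> constructor <;> linarith
    rw [dT, sub_zero, AddCircle.norm_eq, hr]
    rw [abs_of_nonneg (by push_cast; linarith)]
    push_cast; ring
  have key1 : (((s + a : ℝ) : T1) + ((2 * (1/4 - s - b) : ℝ) : T1)) = ((1/2 - s + a - 2*b : ℝ) : T1) := by
    rw [← AddCircle.coe_add]; congr 1; ring
  simp only [Function.comp_apply, Hmap, h1, key1, Vmap, h2]
  refine Prod.ext rfl ?_
  show (((s + 3/4 + b : ℝ) : T1) + ((2 * (1/2 - s + a - 2*b) : ℝ) : T1)) = _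
  rw [← AddCircle.coe_add]
  have : (s + 3/4 + b + 2 * (1/2 - s + a - 2*b) : ℝ) = (3/4 - s + 2*a - 3*b) + 1 := by ring
  rw [this, AddCircle.coe_add, AddCircle.coe_period, add_zero]
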